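/- Let A be an invertible symmetric real N×N matrix with eigenvalues λ_1,…,λ_N, and τ_u, τ_p > 0. The 2N×2N iteration matrix M = [[I - 2τ_uτ_p AᵀA, -τ_u Aᵀ], [τ_p A, I]] has spectral radius equal to max over k of f(τ_uτ_p λ_k²), where f(t) = √(1-t) for 0 < t ≤ 1 and f(t) = t - 1 + √(t²-t) for t ≥ 1. -/

import Mathlib

open Matrix

/-- The PDHG convergence factor. -/
noncomputable def pdhgRate (t : ℝ) : ℝ :=
  if t ≤ 1 then Real.sqrt (1 - t) else t - 1 + Real.sqrt (t ^ 2 - t)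

section aux

lemma mem_spectrum_iff_det' {n : Type*} [Fintype n] [DecidableEq n]
    (M : Matrix n n ℂ) (z : ℂ) :
    z ∈ spectrum ℂ M ↔ (z • (1 : Matrix n n ℂ) - M).det = 0 := by
  rw [spectrum.mem_iff, Matrix.isUnit_iff_isUnit_det, isUnit_iff_ne_zero, ne_eq, not_not,
    Algebra.algebraMap_eq_smul_one]

lemma det_fromBlocks_diagonal' {n : ℕ} {R : Type*} [CommRing R] (a b c d : Fin n → R) :
    (Matrix.fromBlocks (diagonal a) (diagonal b) (diagonal c) (diagonal d)).det
      = ∏ k, (a k * d k - b k * c k) := by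
  have h : Matrix.fromBlocks (diagonal a) (diagonal b) (diagonal c) (diagonal d)
      = (Matrix.blockDiagonal (fun k =>
          Matrix.of (fun i j : Bool =>
            if i then (if j then d k else c k) else (if j then b k else a k)))).submatrix
          (Equiv.boolProdEquivSum (Fin n)).symm (Equiv.boolProdEquivSum (Fin n)).symm := by
    ext i j
    rcases i with i | i <;> rcases j with j | j <;>
      simp [Matrix.blockDiagonal_apply, Matrix.diagonal_apply, eq_comm]
  rw [h, Matrix.det_submatrix_equiv_self, Matrix.det_blockDiagonal]
  congr 1; ext k
  rw [← Matrix.det_submatrix_equiv_self finTwoEquiv, Matrix.det_fin_two]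
  simp [finTwoEquiv]

lemma sq_im_zero {w : ℂ} (h : (w ^ 2).im = 0) : w.re = 0 ∨ w.im = 0 := by
  simp [Complex.sq_norm, pow_two, Complex.mul_im] at h
  rcases mul_eq_zero.mp (by linarith : w.re * w.im = 0) with h | h
  · exact Or.inl h
  · exact Or.inr h

lemma abs_le_pdhgRate {t : ℝ} (ht : 0 ≤ t) {z : ℂ}
    (hz : (z - ((1 - t : ℝ) : ℂ)) ^ 2 = ((t ^ 2 - t : ℝ) : ℂ)) :
    ‖z‖ ≤ pdhgRate t := by
  set w : ℂ := z - ((1 - t : ℝ) : ℂ) with hw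
  have hre : z.re = (1 - t) + w.re := by simp [hw]
  have him : z.im = w.im := by simp [hw]
  have h2re : (w ^ 2).re = t ^ 2 - t := by rw [hz, Complex.ofReal_re]
  have h2im : (w ^ 2).im = 0 := by rw [hz, Complex.ofReal_im]
  have hsq : w.re ^ 2 - w.im ^ 2 = t ^ 2 - t := by
    have := h2re; simp [pow_two, Complex.mul_re] at this ⊢; linarith
  by_cases hle : t ≤ 1
  · -- w.re = 0
    have hwre : w.re = 0 := by
      rcases sq_im_zero h2im with h | h
      · exact h
      · nlinarith [sq_nonneg w.re, sq_nonneg (1 - t)]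
    have habs : ‖z‖ = Real.sqrt (1 - t) := by
      rw [Complex.norm_def, Complex.normSq_apply]
      congr 1
      rw [hre, him, hwre]
      nlinarith
    rw [pdhgRate, if_pos hle, habs]
  · push_neg at hle
    have hwim : w.im = 0 := by
      rcases sq_im_zero h2im with h | h
      · nlinarith [sq_nonneg w.im]
      · exact h
    have hz_im : z.im = 0 := by rw [him, hwim]
    have hwre2 : w.re ^ 2 = t ^ 2 - t := by nlinarith
    have hwre_le : |w.re| = Real.sqrt (t ^ 2 - t) := by
      rw [← hwre2, Real.sqrt_sq_eq_abs]
    have habs : ‖z‖ = |z.re| := by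
      rw [Complex.norm_def, Complex.normSq_apply, hz_im]
      rw [show z.re * z.re + 0 * 0 = z.re * z.re by ring, Real.sqrt_mul_self_eq_abs]
    rw [pdhgRate, if_neg (by linarith), habs, hre]
    calc |1 - t + w.re| ≤ |1 - t| + |w.re| := abs_add_le _ _
      _ = (t - 1) + Real.sqrt (t ^ 2 - t) := by rw [hwre_le, abs_of_nonpos (by linarith)]; ring

lemma exists_root_abs_eq {t : ℝ} (ht : 0 ≤ t) :
    ∃ z : ℂ, (z - ((1 - t : ℝ) : ℂ)) ^ 2 = ((t ^ 2 - t : ℝ) : ℂ) ∧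
      ‖z‖ = pdhgRate t := by
  by_cases hle : t ≤ 1
  · refine ⟨⟨1 - t, Real.sqrt (t - t ^ 2)⟩, ?_, ?_⟩
    · have him : (⟨1 - t, Real.sqrt (t - t ^ 2)⟩ - ((1 - t : ℝ) : ℂ) : ℂ)
          = (Real.sqrt (t - t ^ 2) : ℂ) * Complex.I := by
        apply Complex.ext <;> simp
      rw [him, mul_pow, Complex.I_sq, ← Complex.ofReal_pow,
        Real.sq_sqrt (by nlinarith : (0:ℝ) ≤ t - t ^ 2)]
      push_cast
      ring
    · rw [pdhgRate, if_pos hle, Complex.norm_def, Complex.normSq_apply]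
      have hs : Real.sqrt (t - t ^ 2) * Real.sqrt (t - t ^ 2) = t - t ^ 2 :=
        Real.mul_self_sqrt (by nlinarith)
      congr 1
      show (1 - t) * (1 - t) + Real.sqrt (t - t ^ 2) * Real.sqrt (t - t ^ 2) = 1 - t
      nlinarith [hs]
  · push_neg at hle
    refine ⟨((1 - t - Real.sqrt (t ^ 2 - t) : ℝ) : ℂ), ?_, ?_⟩
    · rw [← Complex.ofReal_sub, ← Complex.ofReal_pow]
      norm_cast
      rw [show 1 - t - Real.sqrt (t ^ 2 - t) - (1 - t) = -Real.sqrt (t ^ 2 - t) by ring]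
      rw [neg_pow, Real.sq_sqrt (by nlinarith)]
      ring
    · rw [Complex.norm_real, Real.norm_eq_abs, pdhgRate, if_neg (by linarith),
        abs_of_nonpos (by nlinarith [Real.sqrt_nonneg (t ^ 2 - t)])]
      ring

end aux

/-- For invertible symmetric `A` with eigenvalues `λ_k` (orthogonal eigendecomposition
`A = Q Λ Qᵀ`), the spectral radius of the PDHG iteration matrix
`M = [[I - 2τ_uτ_p AᵀA, -τ_u Aᵀ], [τ_p A, I]]` equals `max_k f(τ_uτ_p λ_k²)`. -/
theorem stmt_4 {N : ℕ} (hN : 0 < N) (A : Matrix (Fin N) (Fin N) ℝ) (hA : A.IsSymm)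
    (hdet : IsUnit A.det) (lam : Fin N → ℝ) (Q : Matrix (Fin N) (Fin N) ℝ)
    (hQ : Q * Qᵀ = 1) (hdecomp : A = Q * Matrix.diagonal lam * Qᵀ)
    (τu τp : ℝ) (hu : 0 < τu) (hp : 0 < τp) :
    IsGreatest
      ((fun z : ℂ => ‖z‖) ''
        spectrum ℂ
          ((Matrix.fromBlocks (1 - (2 * τu * τp) • (Aᵀ * A)) ((-τu) • Aᵀ)
              (τp • A) 1).map Complex.ofReal))
      (Finset.univ.sup' (Finset.univ_nonempty_iff.mpr ⟨⟨0, hN⟩⟩)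
        fun k : Fin N => pdhgRate (τu * τp * lam k ^ 2)) := by
  have hQ' : Qᵀ * Q = 1 := mul_eq_one_comm.mp hQ
  have hAt : Aᵀ = A := hA
  set L : Matrix (Fin N) (Fin N) ℝ := Matrix.diagonal lam with hL
  have hAA : Aᵀ * A = Q * (L * L) * Qᵀ := by
    rw [hAt, hdecomp]
    calc Q * L * Qᵀ * (Q * L * Qᵀ) = Q * L * (Qᵀ * Q) * L * Qᵀ := by
          noncomm_ring
      _ = Q * (L * L) * Qᵀ := by rw [hQ']; noncomm_ring
  set c : ℝ := 2 * τu * τp with hc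
  set M : Matrix (Fin N ⊕ Fin N) (Fin N ⊕ Fin N) ℝ :=
    Matrix.fromBlocks (1 - c • (Aᵀ * A)) ((-τu) • Aᵀ) (τp • A) 1 with hM
  set M' : Matrix (Fin N ⊕ Fin N) (Fin N ⊕ Fin N) ℝ :=
    Matrix.fromBlocks (1 - c • (L * L)) ((-τu) • L) (τp • L) 1 with hM'
  set B : Matrix (Fin N ⊕ Fin N) (Fin N ⊕ Fin N) ℝ :=
    Matrix.fromBlocks Q 0 0 Q with hB
  have hBBt : B * Bᵀ = 1 := by
    rw [hB, Matrix.fromBlocks_transpose, Matrix.fromBlocks_multiply]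
    simp [hQ, Matrix.fromBlocks_one]
  have hsim : M = B * M' * Bᵀ := by
    rw [hM, hM', hB, Matrix.fromBlocks_transpose, Matrix.fromBlocks_multiply,
      Matrix.fromBlocks_multiply]
    refine (Matrix.fromBlocks_inj.mpr ⟨?_, ?_, ?_, ?_⟩).symm
    · rw [hAA]
      simp only [Matrix.transpose_zero, Matrix.mul_zero, Matrix.zero_mul, smul_zero, add_zero,
        Matrix.mul_sub, Matrix.mul_one, Matrix.sub_mul, Matrix.mul_smul, Matrix.smul_mul, hQ,
        Matrix.mul_assoc]
    · simp only [Matrix.zero_mul, Matrix.mul_zero, add_zero, zero_add, Matrix.mul_one,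
        Matrix.transpose_zero, Matrix.mul_smul, Matrix.smul_mul, Matrix.mul_assoc]
      rw [hAt, hdecomp, Matrix.mul_assoc]
    · simp only [Matrix.zero_mul, Matrix.mul_zero, add_zero, zero_add, Matrix.mul_one,
        Matrix.transpose_zero, Matrix.mul_smul, Matrix.smul_mul, Matrix.mul_assoc]
      rw [hdecomp, Matrix.mul_assoc]
    · simp [hQ]
  -- eigenvalue parameters
  set t : Fin N → ℝ := fun k => τu * τp * lam k ^ 2 with ht
  -- the matrix M' is a fromBlocks of diagonal matrices
  have hM'd : M' = Matrix.fromBlocks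
      (Matrix.diagonal fun k => 1 - c * lam k ^ 2)
      (Matrix.diagonal fun k => -τu * lam k)
      (Matrix.diagonal fun k => τp * lam k)
      (Matrix.diagonal fun _ => (1 : ℝ)) := by
    rw [hM', hL, Matrix.diagonal_mul_diagonal]
    refine Matrix.fromBlocks_inj.mpr ⟨?_, ?_, ?_, ?_⟩ <;>
      · ext i j
        rcases eq_or_ne i j with rfl | h
        · simp [Matrix.diagonal_apply_eq, Matrix.one_apply, pow_two]
        · simp [Matrix.diagonal_apply_ne _ h, Matrix.one_apply, h]
  -- complex versions
  have hofReal : (⇑Complex.ofRealHom : ℝ → ℂ) = Complex.ofReal := rfl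
  have hmapmul : ∀ (X Y : Matrix (Fin N ⊕ Fin N) (Fin N ⊕ Fin N) ℝ),
      (X * Y).map Complex.ofReal = X.map Complex.ofReal * Y.map Complex.ofReal := by
    intro X Y
    rw [← hofReal, Matrix.map_mul]
  have hBc : (B.map Complex.ofReal) * (B.map Complex.ofReal)ᵀ = 1 := by
    rw [← Matrix.transpose_map, ← hmapmul, hBBt, ← hofReal, Matrix.map_one] <;> simp
  -- determinant identity
  have hdetz : ∀ z : ℂ,
      (z • 1 - M.map Complex.ofReal).det = (z • 1 - M'.map Complex.ofReal).det := by
    intro z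
    have h1 : z • (1 : Matrix (Fin N ⊕ Fin N) (Fin N ⊕ Fin N) ℂ) - M.map Complex.ofReal
        = (B.map Complex.ofReal) * (z • 1 - M'.map Complex.ofReal)
            * (B.map Complex.ofReal)ᵀ := by
      rw [Matrix.mul_sub, Matrix.sub_mul, hsim, hmapmul, hmapmul, Matrix.transpose_map]
      congr 1
      rw [Matrix.mul_smul, Matrix.mul_one, Matrix.smul_mul, hBc]
    rw [h1, Matrix.det_mul, Matrix.det_mul, mul_comm, ← mul_assoc, ← Matrix.det_mul]
    rw [show (B.map Complex.ofReal)ᵀ * B.map Complex.ofReal = 1 from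
        mul_eq_one_comm.mp hBc, Matrix.det_one, one_mul]
  -- the shifted matrix as fromBlocks of diagonals over ℂ
  have hform : ∀ z : ℂ,
      z • (1 : Matrix (Fin N ⊕ Fin N) (Fin N ⊕ Fin N) ℂ) - M'.map Complex.ofReal
        = Matrix.fromBlocks
            (Matrix.diagonal fun k => z - ((1 - c * lam k ^ 2 : ℝ) : ℂ))
            (Matrix.diagonal fun k => -(((-τu * lam k : ℝ)) : ℂ))
            (Matrix.diagonal fun k => -(((τp * lam k : ℝ)) : ℂ))
            (Matrix.diagonal fun _ => z - 1) := by
    intro z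
    rw [hM'd, Matrix.fromBlocks_map, ← Matrix.fromBlocks_one, Matrix.fromBlocks_smul,
      Matrix.diagonal_map Complex.ofReal_zero, Matrix.diagonal_map Complex.ofReal_zero,
      Matrix.diagonal_map Complex.ofReal_zero, Matrix.diagonal_map Complex.ofReal_zero]
    rw [sub_eq_add_neg, Matrix.fromBlocks_neg, Matrix.fromBlocks_add]
    refine Matrix.fromBlocks_inj.mpr ⟨?_, ?_, ?_, ?_⟩
    · ext i j
      rcases eq_or_ne i j with rfl | h
      · simp [Matrix.diagonal_apply_eq, Matrix.one_apply, sub_eq_add_neg]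
      · simp [Matrix.diagonal_apply_ne _ h, Matrix.one_apply, h]
    · simp
    · simp
    · ext i j
      rcases eq_or_ne i j with rfl | h
      · simp [Matrix.diagonal_apply_eq, Matrix.one_apply, sub_eq_add_neg]
      · simp [Matrix.diagonal_apply_ne _ h, Matrix.one_apply, h]
  -- determinant as a product of quadratics
  have hdetprod : ∀ z : ℂ,
      (z • 1 - M.map Complex.ofReal).det
        = ∏ k : Fin N, ((z - ((1 - t k : ℝ) : ℂ)) ^ 2 - ((t k ^ 2 - t k : ℝ) : ℂ)) := by
    intro z
    rw [hdetz, hform, det_fromBlocks_diagonal']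
    refine Finset.prod_congr rfl fun k _ => ?_
    simp only [ht, hc]
    push_cast
    ring
  -- spectrum characterization
  have hchar : ∀ z : ℂ, z ∈ spectrum ℂ (M.map Complex.ofReal) ↔
      ∃ k : Fin N, (z - ((1 - t k : ℝ) : ℂ)) ^ 2 = ((t k ^ 2 - t k : ℝ) : ℂ) := by
    intro z
    rw [mem_spectrum_iff_det', hdetprod, Finset.prod_eq_zero_iff]
    constructor
    · rintro ⟨k, -, hk⟩
      exact ⟨k, by rwa [sub_eq_zero] at hk⟩
    · rintro ⟨k, hk⟩
      exact ⟨k, Finset.mem_univ _, by rwa [sub_eq_zero]⟩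
  have htnn : ∀ k : Fin N, 0 ≤ t k := by
    intro k
    simp only [ht]
    positivity
  constructor
  · obtain ⟨k0, -, hk0⟩ := Finset.exists_mem_eq_sup'
      (Finset.univ_nonempty_iff.mpr ⟨(⟨0, hN⟩ : Fin N)⟩)
      (fun k : Fin N => pdhgRate (t k))
    obtain ⟨z0, hz0, habs0⟩ := exists_root_abs_eq (htnn k0)
    exact ⟨z0, (hchar z0).mpr ⟨k0, hz0⟩, by beta_reduce; rw [habs0, hk0]⟩
  · rintro r ⟨z, hz, rfl⟩
    obtain ⟨k, hk⟩ := (hchar z).mp hz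
    exact le_trans (abs_le_pdhgRate (htnn k) hk)
      (Finset.le_sup' (fun k : Fin N => pdhgRate (t k)) (Finset.mem_univ k))
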